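/- Let X be a uniformly convex Banach function lattice on a probability space as above, and let h₁, h₂ ∈ S(L₁(μ))⁺ ∩ L_∞(μ) with ‖h₁ - h₂‖₁ ≤ 1. If x₁, x₂ are the respective entropy maximizers (xᵢ ∈ S(X)⁺ maximizing ∫ hᵢ log|g| dμ over the unit ball), then ‖(x₁ + x₂)/2‖_X ≥ 1 - ‖h₁ - h₂‖₁^(1/2). -/
import Mathlib

open MeasureTheory Filter ENNReal

/-- The entropy `E(h,u) = ∫ h log|u| dμ`, valued in the extended reals
(positive part minus negative part, with the convention `0·log 0 = 0`). -/
noncomputable def entropy {Ω : Type*} [MeasurableSpace Ω] (μ : Measure Ω)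
    (h u : Ω → ℝ) : EReal :=
  ((∫⁻ ω, ENNReal.ofReal (h ω * Real.log |u ω|) ∂μ : ℝ≥0∞) : EReal) -
  ((∫⁻ ω, ENNReal.ofReal (-(h ω * Real.log |u ω|)) ∂μ : ℝ≥0∞) : EReal)


lemma keyHalf {a b x y : ℝ} (hb : 0 ≤ b) (hx : 0 ≤ x) (hy : 0 ≤ y)
    (hax : x = 0 → a = 0) (hby : y = 0 → b = 0) (hba : b ≤ a) :
    a * Real.log x + b * Real.log y - Real.log 2 * |a - b| ≤
      (a + b) * Real.log ((x + y) / 2) := by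
  have habs : |a - b| = a - b := abs_of_nonneg (by linarith)
  rcases eq_or_lt_of_le hx with hx0 | hx0
  · have ha0 : a = 0 := hax hx0.symm
    have hb0 : b = 0 := le_antisymm (ha0 ▸ hba) hb
    simp [ha0, hb0]
  rcases eq_or_lt_of_le hy with hy0 | hy0
  · have hb0 : b = 0 := hby hy0.symm
    subst hb0
    have ha : 0 ≤ a := hba
    simp only [← hy0, Real.log_zero, mul_zero, add_zero, sub_zero, zero_mul]
    rw [Real.log_div (ne_of_gt hx0) two_ne_zero, abs_of_nonneg ha]
    exact le_of_eq (by ring)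
  · -- main case x > 0, y > 0
    have hm0 : 0 < (x + y) / 2 := by linarith
    have E1 : Real.log x + Real.log y ≤ 2 * Real.log ((x + y) / 2) := by
      have hxy : x * y ≤ ((x + y) / 2) ^ 2 := by nlinarith [sq_nonneg (x - y)]
      calc Real.log x + Real.log y = Real.log (x * y) :=
            (Real.log_mul (ne_of_gt hx0) (ne_of_gt hy0)).symm
        _ ≤ Real.log (((x + y) / 2) ^ 2) := Real.log_le_log (by positivity) hxy
        _ = 2 * Real.log ((x + y) / 2) := by
            rw [sq, Real.log_mul (ne_of_gt hm0) (ne_of_gt hm0)]; ring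
    have E2 : Real.log x - Real.log 2 ≤ Real.log ((x + y) / 2) := by
      have h1 : Real.log x ≤ Real.log (x + y) := Real.log_le_log hx0 (by linarith)
      have h2 : Real.log ((x + y) / 2) = Real.log (x + y) - Real.log 2 :=
        Real.log_div (by positivity) two_ne_zero
      linarith
    rw [habs]
    nlinarith [mul_nonneg hb (by linarith : (0:ℝ) ≤ 2 * Real.log ((x + y)/2) - Real.log x - Real.log y),
      mul_nonneg (by linarith : (0:ℝ) ≤ a - b) (by linarith : (0:ℝ) ≤ Real.log ((x + y)/2) - Real.log x + Real.log 2)]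

lemma logKey {a b x y : ℝ} (ha : 0 ≤ a) (hb : 0 ≤ b) (hx : 0 ≤ x) (hy : 0 ≤ y)
    (hax : x = 0 → a = 0) (hby : y = 0 → b = 0) :
    a * Real.log x + b * Real.log y - Real.log 2 * |a - b| ≤
      (a + b) * Real.log ((x + y) / 2) := by
  rcases le_total b a with h | h
  · exact keyHalf hb hx hy hax hby h
  · have H := keyHalf ha hy hx hby hax h
    have hsw : (y + x) / 2 = (x + y) / 2 := by ring
    rw [hsw, abs_sub_comm] at H
    nlinarith [H]

lemma logKeyT {a b x y t : ℝ} (ha : 0 ≤ a) (hb : 0 ≤ b) (hx : 0 ≤ x) (hy : 0 ≤ y)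
    (ht : 0 < t) (hax : x = 0 → a = 0) (hby : y = 0 → b = 0) :
    a * Real.log x + b * Real.log y - Real.log 2 * |a - b| - (a + b) * Real.log t ≤
      a * Real.log ((x + y) / 2 / t) + b * Real.log ((x + y) / 2 / t) := by
  rcases eq_or_lt_of_le (by linarith : (0:ℝ) ≤ x + y) with hxy | hxy
  · have hx0 : x = 0 := by linarith [abs_nonneg x]
    have hy0 : y = 0 := by linarith
    have ha0 : a = 0 := hax hx0
    have hb0 : b = 0 := hby hy0
    simp [ha0, hb0]
  · have hm0 : 0 < (x + y) / 2 := by linarith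
    have hdiv : Real.log ((x + y) / 2 / t) = Real.log ((x + y) / 2) - Real.log t :=
      Real.log_div (ne_of_gt hm0) (ne_of_gt ht)
    have H := logKey ha hb hx hy hax hby
    rw [hdiv]
    nlinarith [H]

lemma mul_log_le {a C z : ℝ} (ha : 0 ≤ a) (haC : a ≤ C) (hz : 0 ≤ z) :
    a * Real.log z ≤ max C 0 * z := by
  rcases le_or_gt (Real.log z) 0 with h | h
  · have h1 : a * Real.log z ≤ 0 := by nlinarith
    have h2 : (0:ℝ) ≤ max C 0 * z := mul_nonneg (le_max_right C 0) hz
    linarith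
  · have h1 : a * Real.log z ≤ max C 0 * Real.log z :=
      mul_le_mul_of_nonneg_right (le_trans haC (le_max_left C 0)) h.le
    have h2 : Real.log z ≤ z := Real.log_le_self hz
    nlinarith [le_max_right C 0]

lemma posPart_ne_top {Ω : Type*} [MeasurableSpace Ω] {μ : Measure Ω} {h u : Ω → ℝ} {C : ℝ}
    (hh0 : 0 ≤ h) (hC : ∀ᵐ ω ∂μ, h ω ≤ C) (hu : Integrable u μ) :
    ∫⁻ ω, ENNReal.ofReal (h ω * Real.log |u ω|) ∂μ ≠ ⊤ := by
  have hb : Integrable (fun ω => max C 0 * |u ω|) μ := hu.abs.const_mul _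
  have hle : ∫⁻ ω, ENNReal.ofReal (h ω * Real.log |u ω|) ∂μ ≤
      ∫⁻ ω, ENNReal.ofReal (max C 0 * |u ω|) ∂μ := by
    refine lintegral_mono_ae (hC.mono fun ω hω => ENNReal.ofReal_le_ofReal ?_)
    exact mul_log_le (hh0 ω) hω (abs_nonneg _)
  have heq : ENNReal.ofReal (∫ ω, max C 0 * |u ω| ∂μ) = ∫⁻ ω, ENNReal.ofReal (max C 0 * |u ω|) ∂μ :=
    MeasureTheory.ofReal_integral_eq_lintegral_ofReal hb
      (Filter.Eventually.of_forall fun ω => mul_nonneg (le_max_right C 0) (abs_nonneg _))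
  rw [← heq] at hle
  exact (lt_of_le_of_lt hle ENNReal.ofReal_lt_top).ne

lemma integrable_of_parts {Ω : Type*} [MeasurableSpace Ω] {μ : Measure Ω} {f : Ω → ℝ}
    (hf : AEMeasurable f μ)
    (hP : ∫⁻ ω, ENNReal.ofReal (f ω) ∂μ ≠ ⊤)
    (hQ : ∫⁻ ω, ENNReal.ofReal (-f ω) ∂μ ≠ ⊤) :
    Integrable f μ := by
  refine ⟨hf.aestronglyMeasurable, ?_⟩
  rw [hasFiniteIntegral_iff_norm]
  have hpt : ∀ ω, ENNReal.ofReal ‖f ω‖ = ENNReal.ofReal (f ω) + ENNReal.ofReal (-f ω) := by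
    intro ω
    rcases le_total 0 (f ω) with h | h
    · rw [Real.norm_eq_abs, abs_of_nonneg h, ENNReal.ofReal_eq_zero.mpr (neg_nonpos.mpr h), add_zero]
    · rw [Real.norm_eq_abs, abs_of_nonpos h, ENNReal.ofReal_eq_zero.mpr h, zero_add]
  calc ∫⁻ ω, ENNReal.ofReal ‖f ω‖ ∂μ
      = ∫⁻ ω, (ENNReal.ofReal (f ω) + ENNReal.ofReal (-f ω)) ∂μ := by
        exact lintegral_congr hpt
    _ = (∫⁻ ω, ENNReal.ofReal (f ω) ∂μ) + ∫⁻ ω, ENNReal.ofReal (-f ω) ∂μ :=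
        lintegral_add_left' (ENNReal.measurable_ofReal.comp_aemeasurable hf) _
    _ < ⊤ := by
        exact ENNReal.add_lt_top.mpr ⟨hP.lt_top, hQ.lt_top⟩

lemma coe_ennreal_eq {x : ℝ≥0∞} (hx : x ≠ ⊤) : ((x.toReal : ℝ) : EReal) = (x : EReal) := by
  conv_rhs => rw [← ENNReal.ofReal_toReal hx]
  rw [EReal.coe_ennreal_ofReal, max_eq_left ENNReal.toReal_nonneg]

lemma entropy_eq_integral {Ω : Type*} [MeasurableSpace Ω] {μ : Measure Ω} {h u : Ω → ℝ}
    (hint : Integrable (fun ω => h ω * Real.log |u ω|) μ) :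
    entropy μ h u = ((∫ ω, h ω * Real.log |u ω| ∂μ : ℝ) : EReal) := by
  set f := fun ω => h ω * Real.log |u ω| with hf
  have hfin : ∫⁻ ω, ENNReal.ofReal ‖f ω‖ ∂μ < ⊤ := by
    rw [← hasFiniteIntegral_iff_norm]; exact hint.2
  have hP : ∫⁻ ω, ENNReal.ofReal (f ω) ∂μ ≠ ⊤ := by
    refine (lt_of_le_of_lt (lintegral_mono fun ω => ENNReal.ofReal_le_ofReal ?_) hfin).ne
    exact le_abs_self _
  have hQ : ∫⁻ ω, ENNReal.ofReal (-f ω) ∂μ ≠ ⊤ := by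
    refine (lt_of_le_of_lt (lintegral_mono fun ω => ENNReal.ofReal_le_ofReal ?_) hfin).ne
    exact neg_le_abs _
  have hI := integral_eq_lintegral_pos_part_sub_lintegral_neg_part hint
  have : entropy μ h u =
      ((∫⁻ ω, ENNReal.ofReal (f ω) ∂μ : ℝ≥0∞) : EReal) -
      ((∫⁻ ω, ENNReal.ofReal (-f ω) ∂μ : ℝ≥0∞) : EReal) := by
    simp only [entropy, hf, neg_mul_eq_neg_mul]
  rw [this, ← coe_ennreal_eq hP, ← coe_ennreal_eq hQ, ← EReal.coe_sub, hI]

lemma entropy_const_half {Ω : Type*} [MeasurableSpace Ω] {μ : Measure Ω}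
    [IsProbabilityMeasure μ] {h : Ω → ℝ} (hint : Integrable h μ)
    (hnorm : ∫ ω, h ω ∂μ = 1) :
    entropy μ h (fun _ => (1:ℝ)/2) = ((-Real.log 2 : ℝ) : EReal) := by
  have habs : Real.log |(1:ℝ)/2| = -Real.log 2 := by
    rw [Real.log_abs, one_div, Real.log_inv]
  have hint' : Integrable (fun ω => h ω * Real.log |(1:ℝ)/2|) μ := hint.mul_const _
  rw [entropy_eq_integral hint']
  congr 1
  simp only [habs, integral_mul_const, hnorm, one_mul]

/-- Let `X` (with norm `N`) be a uniformly convex Banach function lattice on a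
probability space, `h₁, h₂ ∈ S(L₁(μ))⁺ ∩ L_∞(μ)` with `‖h₁ - h₂‖₁ ≤ 1`,
and `x₁, x₂ ∈ S(X)⁺` the respective entropy maximizers. Then
`‖(x₁ + x₂)/2‖_X ≥ 1 - ‖h₁ - h₂‖₁^(1/2)`. -/
theorem entropy_maximizers_midpoint {Ω : Type*} [MeasurableSpace Ω]
    (μ : Measure Ω) [IsProbabilityMeasure μ] (N : (Ω → ℝ) → ℝ)
    (hadd : ∀ f g : Ω → ℝ, N (f + g) ≤ N f + N g)
    (hsmul : ∀ (c : ℝ) (f : Ω → ℝ), N (c • f) = |c| * N f)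
    (hmono : ∀ f g : Ω → ℝ, (∀ ω, |f ω| ≤ |g ω|) → N f ≤ N g)
    (hIntBall : ∀ f : Ω → ℝ, N f ≤ 1 → Integrable f μ)
    (hL1 : ∀ f : Ω → ℝ, Integrable f μ → ∫ ω, |f ω| ∂μ ≤ N f)
    (hhalf : N (fun _ => 1 / 2) ≤ 1)
    (hUC : ∀ ε : ℝ, 0 < ε → ∃ δ : ℝ, 0 < δ ∧ ∀ f g : Ω → ℝ,
      N f = 1 → N g = 1 → ε ≤ N (f - g) →
      N (fun ω => (f ω + g ω) / 2) ≤ 1 - δ)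
    -- `h₁, h₂ ∈ S(L₁(μ))⁺ ∩ L_∞(μ)`
    (h₁ h₂ : Ω → ℝ) (h₁meas : Measurable h₁) (h₂meas : Measurable h₂)
    (h₁0 : 0 ≤ h₁) (h₂0 : 0 ≤ h₂)
    (h₁int : Integrable h₁ μ) (h₂int : Integrable h₂ μ)
    (h₁bdd : ∃ C : ℝ, ∀ᵐ ω ∂μ, h₁ ω ≤ C) (h₂bdd : ∃ C : ℝ, ∀ᵐ ω ∂μ, h₂ ω ≤ C)
    (h₁norm : ∫ ω, h₁ ω ∂μ = 1) (h₂norm : ∫ ω, h₂ ω ∂μ = 1)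
    (hclose : ∫ ω, |h₁ ω - h₂ ω| ∂μ ≤ 1)
    -- `x₁, x₂` the respective entropy maximizers
    (x₁ x₂ : Ω → ℝ) (hx₁0 : 0 ≤ x₁) (hx₂0 : 0 ≤ x₂)
    (hx₁S : N x₁ = 1) (hx₂S : N x₂ = 1)
    (hx₁max : entropy μ h₁ x₁ =
      sSup {e : EReal | ∃ g : Ω → ℝ, N g ≤ 1 ∧ e = entropy μ h₁ g})
    (hx₂max : entropy μ h₂ x₂ =
      sSup {e : EReal | ∃ g : Ω → ℝ, N g ≤ 1 ∧ e = entropy μ h₂ g})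
    (hx₁supp : ∀ᵐ ω ∂μ, (x₁ ω ≠ 0 ↔ h₁ ω ≠ 0))
    (hx₂supp : ∀ᵐ ω ∂μ, (x₂ ω ≠ 0 ↔ h₂ ω ≠ 0)) :
    1 - (∫ ω, |h₁ ω - h₂ ω| ∂μ) ^ (1 / 2 : ℝ) ≤
      N (fun ω => (x₁ ω + x₂ ω) / 2) := by
  classical
  set m : Ω → ℝ := fun ω => (x₁ ω + x₂ ω) / 2 with hm
  set t : ℝ := N m with htdef
  set δ : ℝ := ∫ ω, |h₁ ω - h₂ ω| ∂μ with hδdef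
  have hδ0 : 0 ≤ δ := by rw [hδdef]; exact integral_nonneg fun ω => abs_nonneg _
  have hmeq : m = (1/2 : ℝ) • x₁ + (1/2 : ℝ) • x₂ := by
    funext ω
    simp only [hm, Pi.add_apply, Pi.smul_apply, smul_eq_mul]
    ring
  have ht1 : t ≤ 1 := by
    rw [htdef, hmeq]
    calc N ((1/2 : ℝ) • x₁ + (1/2 : ℝ) • x₂) ≤ N ((1/2:ℝ) • x₁) + N ((1/2:ℝ) • x₂) :=
          hadd _ _
      _ = 1 := by
          rw [hsmul, hsmul, hx₁S, hx₂S, abs_of_pos (by norm_num : (0:ℝ) < 1/2)]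
          norm_num
  have ht2 : (1:ℝ)/2 ≤ t := by
    have h1 : N ((1/2:ℝ) • x₁) = 1/2 := by rw [hsmul, hx₁S]; norm_num
    have h2 : N ((1/2:ℝ) • x₁) ≤ N m := by
      apply hmono
      intro ω
      have e1 : (0:ℝ) ≤ x₁ ω := hx₁0 ω
      have e2 : (0:ℝ) ≤ x₂ ω := hx₂0 ω
      simp only [hm, Pi.smul_apply, smul_eq_mul]
      rw [abs_of_nonneg (by linarith), abs_of_nonneg (by linarith)]
      linarith
    rw [htdef]; linarith
  have ht0 : (0:ℝ) < t := lt_of_lt_of_le (by norm_num) ht2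
  set g : Ω → ℝ := fun ω => m ω / t with hg
  have hNg : N g = 1 := by
    have hgsm : g = (1/t : ℝ) • m := by
      funext ω; simp only [hg, Pi.smul_apply, smul_eq_mul]; ring
    rw [hgsm, hsmul, abs_of_pos (by positivity), ← htdef]
    field_simp
  have hx₁int : Integrable x₁ μ := hIntBall x₁ hx₁S.le
  have hx₂int : Integrable x₂ μ := hIntBall x₂ hx₂S.le
  have hgint : Integrable g μ := hIntBall g hNg.le
  obtain ⟨C₁, hC₁⟩ := h₁bdd
  obtain ⟨C₂, hC₂⟩ := h₂bdd
  -- positive parts of the entropies of x₁, x₂ are finite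
  have hP₁ := posPart_ne_top h₁0 hC₁ hx₁int (μ := μ)
  have hP₂ := posPart_ne_top h₂0 hC₂ hx₂int (μ := μ)
  -- entropy lower bounds via the constant function 1/2
  have hE₁low : ((-Real.log 2 : ℝ) : EReal) ≤ entropy μ h₁ x₁ := by
    rw [hx₁max]
    exact le_sSup ⟨fun _ => 1/2, hhalf, (entropy_const_half h₁int h₁norm).symm⟩
  have hE₂low : ((-Real.log 2 : ℝ) : EReal) ≤ entropy μ h₂ x₂ := by
    rw [hx₂max]
    exact le_sSup ⟨fun _ => 1/2, hhalf, (entropy_const_half h₂int h₂norm).symm⟩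
  -- negative parts are finite
  have hQ₁ : ∫⁻ ω, ENNReal.ofReal (-(h₁ ω * Real.log |x₁ ω|)) ∂μ ≠ ⊤ := by
    intro htop
    have hbot : entropy μ h₁ x₁ = ⊥ := by
      rw [entropy, htop]
      simp
    rw [hbot] at hE₁low
    exact (EReal.bot_lt_coe _).not_ge hE₁low
  have hQ₂ : ∫⁻ ω, ENNReal.ofReal (-(h₂ ω * Real.log |x₂ ω|)) ∂μ ≠ ⊤ := by
    intro htop
    have hbot : entropy μ h₂ x₂ = ⊥ := by
      rw [entropy, htop]
      simp
    rw [hbot] at hE₂low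
    exact (EReal.bot_lt_coe _).not_ge hE₂low
  -- measurability helpers
  have hlogx₁ : AEMeasurable (fun ω => Real.log |x₁ ω|) μ := by
    have : (fun ω => Real.log |x₁ ω|) = fun ω => Real.log (x₁ ω) :=
      funext fun ω => Real.log_abs _
    rw [this]
    exact Real.measurable_log.comp_aemeasurable hx₁int.aemeasurable
  have hlogx₂ : AEMeasurable (fun ω => Real.log |x₂ ω|) μ := by
    have : (fun ω => Real.log |x₂ ω|) = fun ω => Real.log (x₂ ω) :=
      funext fun ω => Real.log_abs _
    rw [this]
    exact Real.measurable_log.comp_aemeasurable hx₂int.aemeasurable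
  have hlogg : AEMeasurable (fun ω => Real.log |g ω|) μ := by
    have : (fun ω => Real.log |g ω|) = fun ω => Real.log (g ω) :=
      funext fun ω => Real.log_abs _
    rw [this]
    exact Real.measurable_log.comp_aemeasurable hgint.aemeasurable
  have hf₁int : Integrable (fun ω => h₁ ω * Real.log |x₁ ω|) μ :=
    integrable_of_parts (h₁meas.aemeasurable.mul hlogx₁) hP₁ hQ₁
  have hf₂int : Integrable (fun ω => h₂ ω * Real.log |x₂ ω|) μ :=
    integrable_of_parts (h₂meas.aemeasurable.mul hlogx₂) hP₂ hQ₂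
  -- the pointwise key inequality
  set R : Ω → ℝ := fun ω => h₁ ω * Real.log |x₁ ω| + h₂ ω * Real.log |x₂ ω| -
      Real.log 2 * |h₁ ω - h₂ ω| - (h₁ ω + h₂ ω) * Real.log t with hR
  have hRint : Integrable R μ := by
    rw [hR]
    exact ((hf₁int.add hf₂int).sub (((h₁int.sub h₂int).abs).const_mul _)).sub
      ((h₁int.add h₂int).mul_const _)
  have hstar : ∀ᵐ ω ∂μ, R ω ≤ h₁ ω * Real.log |g ω| + h₂ ω * Real.log |g ω| := by
    filter_upwards [hx₁supp, hx₂supp] with ω hs₁ hs₂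
    have hax : x₁ ω = 0 → h₁ ω = 0 := by
      intro hx; by_contra hne; exact (hs₁.mpr hne) hx
    have hby : x₂ ω = 0 → h₂ ω = 0 := by
      intro hx; by_contra hne; exact (hs₂.mpr hne) hx
    have hkey := logKeyT (h₁0 ω) (h₂0 ω) (hx₁0 ω) (hx₂0 ω) ht0 hax hby
    simp only [hR, hg, hm, Real.log_abs]
    exact hkey
  -- upper bounds on h_i * log |g|
  have hub₁ : ∀ᵐ ω ∂μ, h₁ ω * Real.log |g ω| ≤ max C₁ 0 * |g ω| :=
    hC₁.mono fun ω hω => mul_log_le (h₁0 ω) hω (abs_nonneg _)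
  have hub₂ : ∀ᵐ ω ∂μ, h₂ ω * Real.log |g ω| ≤ max C₂ 0 * |g ω| :=
    hC₂.mono fun ω hω => mul_log_le (h₂0 ω) hω (abs_nonneg _)
  -- integrability of h_i * log |g|
  have hBint : Integrable (fun ω => |R ω| + max C₁ 0 * |g ω| + max C₂ 0 * |g ω|) μ :=
    (hRint.abs.add (hgint.abs.const_mul _)).add (hgint.abs.const_mul _)
  have hG₁int : Integrable (fun ω => h₁ ω * Real.log |g ω|) μ := by
    refine hBint.mono' (h₁meas.aemeasurable.mul hlogg).aestronglyMeasurable ?_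
    filter_upwards [hstar, hub₁, hub₂] with ω hst h1 h2
    rw [Real.norm_eq_abs, abs_le]
    have hg0 : (0:ℝ) ≤ |g ω| := abs_nonneg _
    have hm₁ : (0:ℝ) ≤ max C₁ 0 * |g ω| := mul_nonneg (le_max_right _ _) hg0
    have hm₂ : (0:ℝ) ≤ max C₂ 0 * |g ω| := mul_nonneg (le_max_right _ _) hg0
    constructor
    · have := neg_abs_le (R ω)
      linarith
    · linarith [abs_nonneg (R ω)]
  have hG₂int : Integrable (fun ω => h₂ ω * Real.log |g ω|) μ := by
    refine hBint.mono' (h₂meas.aemeasurable.mul hlogg).aestronglyMeasurable ?_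
    filter_upwards [hstar, hub₁, hub₂] with ω hst h1 h2
    rw [Real.norm_eq_abs, abs_le]
    have hg0 : (0:ℝ) ≤ |g ω| := abs_nonneg _
    have hm₁ : (0:ℝ) ≤ max C₁ 0 * |g ω| := mul_nonneg (le_max_right _ _) hg0
    have hm₂ : (0:ℝ) ≤ max C₂ 0 * |g ω| := mul_nonneg (le_max_right _ _) hg0
    constructor
    · have := neg_abs_le (R ω)
      linarith
    · linarith [abs_nonneg (R ω)]
  -- maximality, transferred to real integrals
  have hEg₁ : entropy μ h₁ g ≤ entropy μ h₁ x₁ := by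
    rw [hx₁max]; exact le_sSup ⟨g, hNg.le, rfl⟩
  have hEg₂ : entropy μ h₂ g ≤ entropy μ h₂ x₂ := by
    rw [hx₂max]; exact le_sSup ⟨g, hNg.le, rfl⟩
  rw [entropy_eq_integral hG₁int, entropy_eq_integral hf₁int] at hEg₁
  rw [entropy_eq_integral hG₂int, entropy_eq_integral hf₂int] at hEg₂
  have hr₁ : ∫ ω, h₁ ω * Real.log |g ω| ∂μ ≤ ∫ ω, h₁ ω * Real.log |x₁ ω| ∂μ :=
    EReal.coe_le_coe_iff.mp hEg₁
  have hr₂ : ∫ ω, h₂ ω * Real.log |g ω| ∂μ ≤ ∫ ω, h₂ ω * Real.log |x₂ ω| ∂μ :=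
    EReal.coe_le_coe_iff.mp hEg₂
  -- integrate the key inequality
  have hmono_int : ∫ ω, R ω ∂μ ≤
      ∫ ω, (h₁ ω * Real.log |g ω| + h₂ ω * Real.log |g ω|) ∂μ :=
    integral_mono_ae hRint (hG₁int.add hG₂int) hstar
  have hsum : ∫ ω, (h₁ ω * Real.log |g ω| + h₂ ω * Real.log |g ω|) ∂μ =
      (∫ ω, h₁ ω * Real.log |g ω| ∂μ) + ∫ ω, h₂ ω * Real.log |g ω| ∂μ :=
    integral_add hG₁int hG₂int
  have hRval : ∫ ω, R ω ∂μ =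
      (∫ ω, h₁ ω * Real.log |x₁ ω| ∂μ) + (∫ ω, h₂ ω * Real.log |x₂ ω| ∂μ) -
        Real.log 2 * δ - 2 * Real.log t := by
    have i1 : Integrable (fun ω => h₁ ω * Real.log |x₁ ω| + h₂ ω * Real.log |x₂ ω|) μ :=
      hf₁int.add hf₂int
    have i2 : Integrable (fun ω => Real.log 2 * |h₁ ω - h₂ ω|) μ :=
      ((h₁int.sub h₂int).abs).const_mul _
    have i3 : Integrable (fun ω => (h₁ ω + h₂ ω) * Real.log t) μ :=
      (h₁int.add h₂int).mul_const _
    have i12 : Integrable (fun ω => h₁ ω * Real.log |x₁ ω| + h₂ ω * Real.log |x₂ ω| -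
        Real.log 2 * |h₁ ω - h₂ ω|) μ := i1.sub i2
    have e1 : ∫ ω, R ω ∂μ =
        (∫ ω, (h₁ ω * Real.log |x₁ ω| + h₂ ω * Real.log |x₂ ω| -
          Real.log 2 * |h₁ ω - h₂ ω|) ∂μ) - ∫ ω, (h₁ ω + h₂ ω) * Real.log t ∂μ :=
      integral_sub i12 i3
    have e2 : ∫ ω, (h₁ ω * Real.log |x₁ ω| + h₂ ω * Real.log |x₂ ω| -
        Real.log 2 * |h₁ ω - h₂ ω|) ∂μ =
        (∫ ω, (h₁ ω * Real.log |x₁ ω| + h₂ ω * Real.log |x₂ ω|) ∂μ) -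
          ∫ ω, Real.log 2 * |h₁ ω - h₂ ω| ∂μ := integral_sub i1 i2
    have e3 : ∫ ω, (h₁ ω * Real.log |x₁ ω| + h₂ ω * Real.log |x₂ ω|) ∂μ =
        (∫ ω, h₁ ω * Real.log |x₁ ω| ∂μ) + ∫ ω, h₂ ω * Real.log |x₂ ω| ∂μ :=
      integral_add hf₁int hf₂int
    have e4 : ∫ ω, Real.log 2 * |h₁ ω - h₂ ω| ∂μ = Real.log 2 * δ := by
      rw [integral_const_mul, ← hδdef]
    have e5 : ∫ ω, (h₁ ω + h₂ ω) * Real.log t ∂μ = 2 * Real.log t := by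
      rw [integral_mul_const, integral_add h₁int h₂int, h₁norm, h₂norm]; ring
    rw [e1, e2, e3, e4, e5]
  have hkey2 : -(Real.log 2 * δ) ≤ 2 * Real.log t := by
    rw [hRval] at hmono_int
    rw [hsum] at hmono_int
    linarith
  -- finish
  have hexp : 1 - Real.log 2 * δ / 2 ≤ t := by
    have h1 : -(Real.log 2 * δ) / 2 ≤ Real.log t := by linarith
    have h2 : Real.exp (-(Real.log 2 * δ) / 2) ≤ Real.exp (Real.log t) :=
      Real.exp_le_exp.mpr h1
    rw [Real.exp_log ht0] at h2
    have h3 := Real.add_one_le_exp (-(Real.log 2 * δ) / 2)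
    linarith
  have hδhalf : Real.log 2 * δ / 2 ≤ δ ^ (1/2 : ℝ) := by
    have hlog2 : Real.log 2 < 1 := by
      have := Real.log_two_lt_d9; linarith
    rcases eq_or_lt_of_le hδ0 with h0 | h0
    · rw [← h0, Real.zero_rpow (by norm_num : (1:ℝ)/2 ≠ 0)]
      simp
    · have hδ1 : δ ≤ 1 := hclose
      have hh : δ ^ (1:ℝ) ≤ δ ^ ((1:ℝ)/2) :=
        Real.rpow_le_rpow_of_exponent_ge h0 hδ1 (by norm_num)
      rw [Real.rpow_one] at hh
      have hlog2pos : 0 < Real.log 2 := Real.log_pos (by norm_num)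
      nlinarith
  linarith
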